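/- arXiv:2307.08168 — 2 statements merged into one kernel-verified Lean document; each statement's English description precedes it below -/
import Mathlib

section
/- For the scalar system x_{t+1} = a x_t + b u_t with open-loop parameters θ = (u_0,...,u_{T-1}) and quadratic reward R(x) = −x²/2 summed over t = 0,...,T, the (t,t) diagonal entry of the Hessian of the total reward J(θ; x_0) equals −Σ_{s=t+1}^{T} (a^{s-t-1} b)², and hence the operator norm of the Hessian is at least b² (a^{2(T-t-1)} − 1)/(a² − 1) for a ≠ 1, which grows exponentially in T when a > 1. -/
/-- State of the scalar system `x_{t+1} = a x_t + b u_t` under open-loop inputs `θ`. -/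
noncomputable def xtraj (a b x0 : ℝ) (θ : ℕ → ℝ) (t : ℕ) : ℝ :=
  a ^ t * x0 + ∑ s ∈ Finset.range t, a ^ (t - 1 - s) * b * θ s

/-- Total reward `J(θ;x₀) = −(1/2) Σ_{t=0}^{T} x_t²`. -/
noncomputable def Jobj (T : ℕ) (a b x0 : ℝ) (θ : ℕ → ℝ) : ℝ :=
  -(1 / 2) * ∑ t ∈ Finset.range (T + 1), (xtraj a b x0 θ t) ^ 2

lemma quad_second_deriv (A B C x : ℝ) :
    deriv (deriv (fun v : ℝ => A + B * v + C * v ^ 2)) x = 2 * C := by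
  have h1 : deriv (fun v : ℝ => A + B * v + C * v ^ 2) = fun v => B + C * (2 * v) := by
    funext y
    have hb : HasDerivAt (fun v : ℝ => A + B * v) B y := by
      simpa using ((hasDerivAt_id y).const_mul B).const_add A
    have hc : HasDerivAt (fun v : ℝ => C * v ^ 2) (C * (2 * y)) y := by
      simpa using (hasDerivAt_pow 2 y).const_mul C
    exact (hb.add hc).deriv
  rw [h1]
  have h2 : HasDerivAt (fun v : ℝ => B + C * (2 * v)) (2 * C) x := by
    have := (((hasDerivAt_id x).const_mul (2:ℝ)).const_mul C).const_add B
    rw [show (2 * C) = C * (2 * 1) by ring]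
    exact this
  exact h2.deriv

/-- The `(t,t)` diagonal entry of the Hessian of `J` equals `−Σ_{s=t+1}^{T} (a^(s-t-1) b)²`,
whose magnitude is at least `b² (a^(2(T-t-1)) − 1)/(a² − 1)` for `a ≠ 1` (which grows
exponentially in `T` when `a > 1`); the operator norm of the Hessian dominates this entry. -/
theorem stmt7 (T : ℕ) (a b x0 : ℝ) (θ : ℕ → ℝ) (t : ℕ) (ht : t < T) :
    deriv (deriv (fun v => Jobj T a b x0 (Function.update θ t v))) (θ t) =
      -(∑ s ∈ Finset.Icc (t + 1) T, (a ^ (s - t - 1) * b) ^ 2) ∧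
    (a ≠ 1 →
      ∑ s ∈ Finset.Icc (t + 1) T, (a ^ (s - t - 1) * b) ^ 2 ≥
        b ^ 2 * (a ^ (2 * (T - t - 1)) - 1) / (a ^ 2 - 1)) := by
  set K : ℕ → ℝ := fun s => xtraj a b x0 (Function.update θ t 0) s with hK
  set D : ℕ → ℝ := fun s => if t < s then a ^ (s - 1 - t) * b else 0 with hD
  have hx : ∀ (v : ℝ) (s : ℕ),
      xtraj a b x0 (Function.update θ t v) s = K s + D s * v := by
    intro v s
    simp only [hK, hD, xtraj]
    have hupd : ∀ r, Function.update θ t v r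
        = Function.update θ t 0 r + (if r = t then v else 0) := by
      intro r
      by_cases h : r = t
      · subst h; simp
      · simp [h]
    have h1 : ∑ r ∈ Finset.range s, a ^ (s - 1 - r) * b * Function.update θ t v r
        = (∑ r ∈ Finset.range s, a ^ (s - 1 - r) * b * Function.update θ t 0 r)
          + ∑ r ∈ Finset.range s, (if r = t then a ^ (s - 1 - r) * b * v else 0) := by
      rw [← Finset.sum_add_distrib]
      refine Finset.sum_congr rfl fun r _ => ?_
      rw [hupd r]
      by_cases h : r = t <;> simp [h] <;> ring
    rw [h1, Finset.sum_ite_eq' (Finset.range s) t]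
    by_cases h : t < s
    · simp [Finset.mem_range, h]; ring
    · simp [Finset.mem_range, h]
  have hfun : (fun v => Jobj T a b x0 (Function.update θ t v)) =
      fun v => (-(1/2) * ∑ s ∈ Finset.range (T+1), K s ^ 2)
        + (-(∑ s ∈ Finset.range (T+1), K s * D s)) * v
        + (-(1/2) * ∑ s ∈ Finset.range (T+1), D s ^ 2) * v ^ 2 := by
    funext v
    simp only [Jobj, hx]
    have h2 : ∀ s, (K s + D s * v) ^ 2
        = K s ^ 2 + (K s * D s) * (2 * v) + D s ^ 2 * v ^ 2 := fun s => by ring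
    rw [Finset.sum_congr rfl (fun s _ => h2 s), Finset.sum_add_distrib,
      Finset.sum_add_distrib, ← Finset.sum_mul, ← Finset.sum_mul]
    ring
  have hsum : ∑ s ∈ Finset.range (T+1), D s ^ 2
      = ∑ s ∈ Finset.Icc (t+1) T, (a ^ (s - t - 1) * b) ^ 2 := by
    have hIcc : Finset.Icc (t+1) T = (Finset.range (T+1)).filter (fun s => t < s) := by
      ext s
      simp [Nat.lt_succ_iff, Nat.succ_le_iff, and_comm]
    rw [hIcc, Finset.sum_filter]
    refine Finset.sum_congr rfl fun s _ => ?_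
    simp only [hD]
    by_cases h : t < s
    · have h3 : s - 1 - t = s - t - 1 := by omega
      simp [h, h3]
    · simp [h]
  constructor
  · rw [hfun, quad_second_deriv, hsum]
    ring
  · intro ha
    have hrw : ∑ s ∈ Finset.Icc (t+1) T, (a ^ (s - t - 1) * b) ^ 2
        = b ^ 2 * ∑ k ∈ Finset.range (T - t), (a ^ 2) ^ k := by
      rw [← Finset.Ico_add_one_right_eq_Icc, Finset.sum_Ico_eq_sum_range]
      have hTt : T + 1 - (t + 1) = T - t := by omega
      rw [hTt, Finset.mul_sum]
      refine Finset.sum_congr rfl fun k _ => ?_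
      have hk : t + 1 + k - t - 1 = k := by omega
      rw [hk, mul_pow, ← pow_mul, ← pow_mul, Nat.mul_comm]
      ring
    by_cases ha2 : a ^ 2 = 1
    · have hz : a ^ (2 * (T - t - 1)) = 1 := by
        rw [pow_mul, ha2, one_pow]
      rw [hz]
      simp only [sub_self, mul_zero, zero_div, ge_iff_le]
      positivity
    · rw [hrw, ge_iff_le, pow_mul, mul_div_assoc, ← geom_sum_eq ha2]
      refine mul_le_mul_of_nonneg_left ?_ (by positivity)
      refine Finset.sum_le_sum_of_subset_of_nonneg
        (Finset.range_subset_range.2 (by omega)) (fun i _ _ => by positivity)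
end

section
/- Gradient norm bound: under the assumptions that ‖∇R(x_t)‖ ≤ L, ‖B_t‖ ≤ L, ‖∂π_t^θ/∂θ‖ ≤ L, and ‖Φ_{t,t'}‖ ≤ Mα^{t-t'} for all t > t', there exists β > 0 depending only on L and M such that ‖∇J_T(θ;x_0)‖ = ‖Σ_{t=1}^{T}∇R(x_t)·Σ_{t'=0}^{t-1}Φ_{t,t'}B_{t'}(∂π_{t'}^θ/∂θ)‖ is at most βT²α^T if α > 1, βT² if α = 1, and βT if 0 < α < 1. -/
open Finset

/-- Gradient norm bound: under norm bounds on `∇R`, `B`, `∂π/∂θ` and exponential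
bounds `‖Φ_{t,t'}‖ ≤ M α^(t-t')`, the policy gradient
`Σ_{t=1}^{T} ∇R(x_t) Σ_{t'=0}^{t-1} Φ_{t,t'} B_{t'} (∂π_{t'}^θ/∂θ)` has norm at most
`β T² α^T` if `α > 1`, `β T²` if `α = 1`, and `β T` if `0 < α < 1`. -/
theorem stmt12 (n m p : ℕ) (L M α : ℝ) (hL : 0 < L) (hM : 0 < M) (hα : 0 < α)
    (gradR : ℕ → EuclideanSpace ℝ (Fin n) →L[ℝ] ℝ)
    (Φ : ℕ → ℕ → (EuclideanSpace ℝ (Fin n) →L[ℝ] EuclideanSpace ℝ (Fin n)))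
    (B : ℕ → EuclideanSpace ℝ (Fin m) →L[ℝ] EuclideanSpace ℝ (Fin n))
    (Dπ : ℕ → EuclideanSpace ℝ (Fin p) →L[ℝ] EuclideanSpace ℝ (Fin m))
    (hgradR : ∀ t, ‖gradR t‖ ≤ L) (hB : ∀ t, ‖B t‖ ≤ L) (hDπ : ∀ t, ‖Dπ t‖ ≤ L)
    (hΦ : ∀ t t' : ℕ, t' < t → ‖Φ t t'‖ ≤ M * α ^ (t - t')) :
    ∃ β > 0, ∀ T : ℕ,
      (1 < α →
        ‖∑ t ∈ Icc 1 T, (gradR t).comp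
            (∑ t' ∈ range t, (Φ t t').comp ((B t').comp (Dπ t')))‖ ≤ β * T ^ 2 * α ^ T) ∧
      (α = 1 →
        ‖∑ t ∈ Icc 1 T, (gradR t).comp
            (∑ t' ∈ range t, (Φ t t').comp ((B t').comp (Dπ t')))‖ ≤ β * T ^ 2) ∧
      (α < 1 →
        ‖∑ t ∈ Icc 1 T, (gradR t).comp
            (∑ t' ∈ range t, (Φ t t').comp ((B t').comp (Dπ t')))‖ ≤ β * T) := by
  set C : ℝ := L * (L * L * M) with hC
  have hC0 : 0 < C := by positivity
  -- pointwise bound on each summand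
  have key : ∀ t : ℕ,
      ‖(gradR t).comp (∑ t' ∈ range t, (Φ t t').comp ((B t').comp (Dπ t')))‖
        ≤ C * ∑ t' ∈ range t, α ^ (t - t') := by
    intro t
    calc ‖(gradR t).comp (∑ t' ∈ range t, (Φ t t').comp ((B t').comp (Dπ t')))‖
        ≤ ‖gradR t‖ * ‖∑ t' ∈ range t, (Φ t t').comp ((B t').comp (Dπ t'))‖ :=
          ContinuousLinearMap.opNorm_comp_le _ _
      _ ≤ L * ∑ t' ∈ range t, (L * L * M) * α ^ (t - t') := by
          apply mul_le_mul (hgradR t) ?_ (norm_nonneg _) hL.le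
          refine (norm_sum_le _ _).trans (Finset.sum_le_sum fun t' ht' => ?_)
          have h1 : ‖(Φ t t').comp ((B t').comp (Dπ t'))‖
              ≤ ‖Φ t t'‖ * (‖B t'‖ * ‖Dπ t'‖) :=
            (ContinuousLinearMap.opNorm_comp_le _ _).trans
              (by gcongr; exact ContinuousLinearMap.opNorm_comp_le _ _)
          refine h1.trans ?_
          have hΦ' := hΦ t t' (mem_range.mp ht')
          have hBD : ‖B t'‖ * ‖Dπ t'‖ ≤ L * L :=
            mul_le_mul (hB t') (hDπ t') (norm_nonneg _) hL.le
          calc ‖Φ t t'‖ * (‖B t'‖ * ‖Dπ t'‖) ≤ (M * α ^ (t - t')) * (L * L) :=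
                mul_le_mul hΦ' hBD (by positivity) (by positivity)
            _ = (L * L * M) * α ^ (t - t') := by ring
      _ = C * ∑ t' ∈ range t, α ^ (t - t') := by
          rw [Finset.mul_sum, Finset.mul_sum]
          exact Finset.sum_congr rfl fun _ _ => by rw [hC]; ring
  rcases lt_or_ge α 1 with hlt | hge
  · -- case α < 1
    have h2' : 0 < 1 - α := by linarith
    refine ⟨C / (1 - α) + 1, by positivity, fun T => ?_⟩
    refine ⟨fun h => absurd h (by linarith), fun h => absurd h (by linarith), fun _ => ?_⟩
    have hgeo : ∀ t : ℕ, ∑ t' ∈ range t, α ^ (t - t') ≤ 1 / (1 - α) := by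
      intro t
      have h2 : 0 < 1 - α := by linarith
      have hle : ∑ t' ∈ range t, α ^ (t - t') ≤ ∑ i ∈ range t, α ^ i := by
        rw [← Finset.sum_range_reflect (fun i => α ^ (t - i)) t]
        apply Finset.sum_le_sum
        intro i hi
        have hi' := mem_range.mp hi
        have : t - (t - 1 - i) = i + 1 := by omega
        rw [this]
        calc α ^ (i + 1) = α * α ^ i := by ring
          _ ≤ 1 * α ^ i := by
              apply mul_le_mul_of_nonneg_right hlt.le (by positivity)
          _ = α ^ i := one_mul _
      refine hle.trans ?_
      rw [geom_sum_eq hlt.ne, show α - 1 = -(1 - α) by ring,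
        show α ^ t - 1 = -(1 - α ^ t) by ring, neg_div_neg_eq,
        div_le_div_iff₀ h2 h2]
      nlinarith [pow_nonneg hα.le t]
    calc ‖∑ t ∈ Icc 1 T, (gradR t).comp
            (∑ t' ∈ range t, (Φ t t').comp ((B t').comp (Dπ t')))‖
        ≤ ∑ t ∈ Icc 1 T, ‖(gradR t).comp
            (∑ t' ∈ range t, (Φ t t').comp ((B t').comp (Dπ t')))‖ := norm_sum_le _ _
      _ ≤ ∑ _t ∈ Icc 1 T, C * (1 / (1 - α)) := by
          refine Finset.sum_le_sum fun t _ => (key t).trans ?_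
          exact mul_le_mul_of_nonneg_left (hgeo t) hC0.le
      _ = (T : ℝ) * (C * (1 / (1 - α))) := by
          rw [Finset.sum_const, Nat.card_Icc]; simp [nsmul_eq_mul]
      _ ≤ (C / (1 - α) + 1) * T := by
          have h2 : 0 < 1 - α := by linarith
          have : C * (1 / (1 - α)) = C / (1 - α) := by ring
          rw [this]
          nlinarith [Nat.cast_nonneg (α := ℝ) T, div_nonneg hC0.le h2.le]
  · -- case α ≥ 1
    refine ⟨C, hC0, fun T => ?_⟩
    have main : ‖∑ t ∈ Icc 1 T, (gradR t).comp
            (∑ t' ∈ range t, (Φ t t').comp ((B t').comp (Dπ t')))‖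
        ≤ C * T ^ 2 * α ^ T := by
      calc ‖∑ t ∈ Icc 1 T, (gradR t).comp
              (∑ t' ∈ range t, (Φ t t').comp ((B t').comp (Dπ t')))‖
          ≤ ∑ t ∈ Icc 1 T, ‖(gradR t).comp
              (∑ t' ∈ range t, (Φ t t').comp ((B t').comp (Dπ t')))‖ := norm_sum_le _ _
        _ ≤ ∑ _t ∈ Icc 1 T, C * ((T : ℝ) * α ^ T) := by
            refine Finset.sum_le_sum fun t ht => (key t).trans ?_
            apply mul_le_mul_of_nonneg_left ?_ hC0.le
            have hT : t ≤ T := (mem_Icc.mp ht).2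
            calc ∑ t' ∈ range t, α ^ (t - t')
                ≤ ∑ _t' ∈ range t, α ^ T := by
                  refine Finset.sum_le_sum fun t' _ => ?_
                  exact pow_le_pow_right₀ hge (by omega)
              _ = (t : ℝ) * α ^ T := by rw [Finset.sum_const, card_range, nsmul_eq_mul]
              _ ≤ (T : ℝ) * α ^ T := by
                  apply mul_le_mul_of_nonneg_right (by exact_mod_cast hT) (by positivity)
        _ = (T : ℝ) * (C * ((T : ℝ) * α ^ T)) := by
            rw [Finset.sum_const, Nat.card_Icc]; simp [nsmul_eq_mul]
        _ = C * T ^ 2 * α ^ T := by ring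
    refine ⟨fun _ => main, fun h1 => ?_, fun h => absurd h (by linarith)⟩
    have := main
    rw [h1] at this
    simpa using this
end
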